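/- Let N ≥ 2 be an integer, q ∈ ℂ with q ≠ 0, and α, β ∈ ℂ. The invariant-metric matrix G(α,β), with entries G_{(ij),(kl)} = q^{2j} α δ_{il} δ_{jk} + β δ_{ij} δ_{kl}, is invertible (i.e. the corresponding bilinear map is nondegenerate) if and only if α ≠ 0 and α + 𝔰β ≠ 0. -/

import Mathlib

open scoped BigOperators

namespace Stmt2

/-- Kronecker delta with values in `ℂ`. -/
noncomputable def kron {N : ℕ} (i j : Fin N) : ℂ := if i = j then 1 else 0

/-- `𝔰 = Σ_{i=1}^{N} q^{−2i}`. -/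
noncomputable def sconst (N : ℕ) (q : ℂ) : ℂ := ∑ i : Fin N, q ^ (-(2 * ((i.1 : ℤ) + 1)))

/-- The invariant-metric matrix `G(α,β)` with entries
`G_{(ij),(kl)} = q^{2j} α δ_{il} δ_{jk} + β δ_{ij} δ_{kl}` (indices `1,…,N`). -/
noncomputable def G (N : ℕ) (q α β : ℂ) : Matrix (Fin N × Fin N) (Fin N × Fin N) ℂ :=
  Matrix.of fun r c =>
    q ^ (2 * ((r.2.1 : ℤ) + 1)) * α * kron r.1 c.2 * kron r.2 c.1
      + β * kron r.1 r.2 * kron c.1 c.2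

/-- Candidate inverse of `G`. -/
noncomputable def B (N : ℕ) (q α γ : ℂ) : Matrix (Fin N × Fin N) (Fin N × Fin N) ℂ :=
  Matrix.of fun r c =>
    α⁻¹ * q ^ (-(2 * ((r.1.1 : ℤ) + 1))) * kron r.2 c.1 * kron r.1 c.2
      - γ * q ^ (-(2 * ((r.1.1 : ℤ) + 1))) * kron r.1 r.2 * q ^ (-(2 * ((c.1.1 : ℤ) + 1))) * kron c.1 c.2

lemma helper1 {α β s γ t : ℂ} (hα : α ≠ 0) (hγ : α * (γ * (α + s * β)) = β) (ht : t ≠ 0) :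
    t * α * (α⁻¹ * t⁻¹) + β * (α⁻¹ * t⁻¹) -
      (t * α * (γ * t⁻¹ * t⁻¹) + β * (γ * s * t⁻¹)) = 1 := by
  field_simp
  linear_combination (-1) * hγ

lemma helper2 {α β s γ u t : ℂ} (hα : α ≠ 0) (hγ : α * (γ * (α + s * β)) = β)
    (hu : u ≠ 0) (ht : t ≠ 0) :
    0 + β * (α⁻¹ * t⁻¹) - (u * α * (γ * u⁻¹ * t⁻¹) + β * (γ * s * t⁻¹)) = 0 := by
  field_simp
  linear_combination (-1) * hγ

set_option maxHeartbeats 800000 in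
lemma helper3 {α t : ℂ} (hα : α ≠ 0) (ht : t ≠ 0) :
    t * α * (α⁻¹ * t⁻¹) + 0 - (0 + 0) = 1 := by
  field_simp; ring

lemma helper4 {α t : ℂ} (hα : α ≠ 0) (ht : t ≠ 0) :
    t * α * (α⁻¹ * t⁻¹) + 0 - 0 = 1 := by
  field_simp; ring

lemma helper5 {α t : ℂ} (hα : α ≠ 0) (ht : t ≠ 0) :
    t * α * (α⁻¹ * t⁻¹) = 1 := by
  field_simp

lemma GB (N : ℕ) (q : ℂ) (hq : q ≠ 0) (α β γ : ℂ) (hα : α ≠ 0)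
    (hγ : α * (γ * (α + sconst N q * β)) = β) : G N q α β * B N q α γ = 1 := by
  ext ⟨i, j⟩ ⟨k, l⟩
  rw [Matrix.mul_apply, Fintype.sum_prod_type]
  simp only [G, B, Matrix.of_apply, kron, mul_ite, ite_mul, mul_one, mul_zero, zero_mul, one_mul,
    add_mul, mul_sub, sub_zero, zero_sub, Finset.sum_sub_distrib, Finset.sum_add_distrib,
    Finset.sum_ite_eq, Finset.sum_ite_eq', Finset.mem_univ, if_true, Finset.sum_ite_irrel,
    Finset.sum_const_zero, zero_add, add_zero, Finset.sum_neg_distrib]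
  have hz : ∀ m : ℤ, q ^ m ≠ 0 := fun m => zpow_ne_zero m hq
  have hsum : ∀ c d : ℂ, (∑ x : Fin N, β * (c * q ^ (-(2 * ((x.1 : ℤ) + 1))) * d))
      = β * (c * sconst N q * d) := by
    intro c d
    simp only [sconst, Finset.mul_sum, Finset.sum_mul]
    try exact Finset.sum_congr rfl fun x _ => by ring
  rw [hsum, Matrix.one_apply]
  simp only [zpow_neg, Prod.mk.injEq, ite_and]
  split_ifs with h1 h2 h3 h4 h5 h6 h7 h8 h9 h10 h11 h12 <;> subst_vars <;>
    first
      | (norm_num; done)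
      | contradiction
      | exact helper1 hα hγ (hz _)
      | exact helper2 hα hγ (hz _) (hz _)
      | exact helper3 hα (hz _)
      | exact helper4 hα (hz _)
      | exact helper5 hα (hz _)
      | (field_simp; try ring; done)

/-- Action of `G` on the weighted diagonal vector. -/
lemma G_mulVec_diag (N : ℕ) (q : ℂ) (hq : q ≠ 0) (α β : ℂ) (i j : Fin N) :
    (G N q α β).mulVec (fun p => q ^ (-(2 * ((p.1.1 : ℤ) + 1))) * kron p.1 p.2) (i, j)
      = kron i j * (α + sconst N q * β) := by
  simp only [Matrix.mulVec, dotProduct, G, Matrix.of_apply, kron, sconst]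
  rw [Fintype.sum_prod_type]
  simp only [mul_ite, ite_mul, mul_one, mul_zero, zero_mul, one_mul, add_mul, zero_add, add_zero,
    Finset.sum_ite_eq, Finset.sum_ite_eq', Finset.mem_univ, if_true, Finset.sum_add_distrib,
    Finset.mul_sum, Finset.sum_ite_irrel, Finset.sum_const_zero]
  split_ifs
  · rw [mul_right_comm, ← zpow_add₀ hq, ← Finset.mul_sum]; simp [mul_comm]
  · exact add_zero 0

/-- Action of `G` (with `α = 0`) on a standard basis vector. -/
lemma G_mulVec_single (N : ℕ) (q : ℂ) (β : ℂ) (i0 j0 : Fin N) (i j : Fin N) :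
    (G N q 0 β).mulVec (fun p => if p = (i0, j0) then 1 else 0) (i, j)
      = β * kron i j * kron i0 j0 := by
  simp only [Matrix.mulVec, dotProduct, G, Matrix.of_apply, kron, mul_zero, zero_mul,
    zero_add, mul_ite, ite_mul, mul_one, one_mul, add_zero]
  rw [Finset.sum_eq_single (i0, j0)] <;> simp +contextual [Prod.ext_iff]

/-- `G(α,β)` is invertible if and only if `α ≠ 0` and `α + 𝔰β ≠ 0`. -/
theorem G_isUnit_iff (N : ℕ) (hN : 2 ≤ N) (q : ℂ) (hq : q ≠ 0) (α β : ℂ) :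
    IsUnit (G N q α β) ↔ α ≠ 0 ∧ α + sconst N q * β ≠ 0 := by
  constructor
  · intro h
    obtain ⟨u, hu⟩ := h
    have hBG : (↑u⁻¹ : Matrix (Fin N × Fin N) (Fin N × Fin N) ℂ) * G N q α β = 1 := by
      rw [← hu]; exact u.inv_mul
    have hker : ∀ w : Fin N × Fin N → ℂ, (G N q α β).mulVec w = 0 → w = 0 := by
      intro w hw
      have h2 : ((↑u⁻¹ : Matrix (Fin N × Fin N) (Fin N × Fin N) ℂ)
          * G N q α β).mulVec w = 0 := by
        rw [← Matrix.mulVec_mulVec, hw, Matrix.mulVec_zero]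
      rwa [hBG, Matrix.one_mulVec] at h2
    constructor
    · intro hα0
      subst hα0
      set i0 : Fin N := ⟨0, by omega⟩
      set j0 : Fin N := ⟨1, by omega⟩
      have hne : i0 ≠ j0 := by simp [i0, j0, Fin.ext_iff]
      have hw : (G N q 0 β).mulVec (fun p => if p = (i0, j0) then 1 else 0) = 0 := by
        funext ⟨i, j⟩
        rw [G_mulVec_single N q β i0 j0 i j]
        simp [kron, hne]
      have := congrFun (hker _ hw) (i0, j0)
      simp at this
    · intro hs0
      have hw : (G N q α β).mulVec
          (fun p => q ^ (-(2 * ((p.1.1 : ℤ) + 1))) * kron p.1 p.2) = 0 := by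
        funext ⟨i, j⟩
        rw [G_mulVec_diag N q hq α β i j, hs0, mul_zero]
        rfl
      have := congrFun (hker _ hw) (⟨0, by omega⟩, ⟨0, by omega⟩)
      simp [kron, zpow_ne_zero, hq] at this
  · rintro ⟨hα, hs⟩
    have hγ : α * (β / (α * (α + sconst N q * β)) * (α + sconst N q * β)) = β := by
      field_simp
      have hs' : α + β * sconst N q ≠ 0 := by rwa [mul_comm] at hs
      exact mul_div_cancel_right₀ β hs'
    have h1 := GB N q hq α β _ hα hγ
    have h2 := mul_eq_one_comm.mp h1
    exact ⟨⟨_, _, h1, h2⟩, rfl⟩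

end Stmt2
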